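/- Let A be a central hyperplane arrangement. If I is a modular ideal of L(A), then either I or its meet-complement I^c is a principal ideal generated by a modular element of L(A). -/

import Mathlib

open Polynomial
open scoped Classical Pointwise

namespace HypArr

variable {K V : Type*} [Field K] [AddCommGroup V] [Module K V] [FiniteDimensional K V]

/-- `A` is an affine hyperplane arrangement: a finite set of affine hyperplanes,
i.e. nonempty affine subspaces of codimension one. -/
def IsArrangement (A : Finset (AffineSubspace K V)) : Prop :=
  ∀ H ∈ A, H ≠ ⊥ ∧ Module.finrank K V = Module.finrank K H.direction + 1

/-- The intersection poset `L(A)`: all nonempty intersections of subfamilies of `A`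
(the empty intersection being the whole space `⊤`).  The order of `L(A)` is *reverse*
inclusion, so `X ≤ Y` in `L(A)` corresponds to `Y ≤ X` as affine subspaces; the
minimal element `0̂` of `L(A)` is the whole space `⊤`. -/
noncomputable def poset (A : Finset (AffineSubspace K V)) : Finset (AffineSubspace K V) :=
  (A.powerset.image fun S => S.inf id).filter (· ≠ ⊥)

/-- The rank of an element of `L(A)`: its codimension in `V`. -/
noncomputable def rk (X : AffineSubspace K V) : ℕ :=
  Module.finrank K V - Module.finrank K X.direction

/-- The rank `r(A)` of the arrangement: the maximal rank of an element of `L(A)`. -/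
noncomputable def rank (A : Finset (AffineSubspace K V)) : ℕ := (poset A).sup rk

/-- An ideal of `L(A)` (with respect to the reverse-inclusion order of `L(A)`):
a downward closed subset of `L(A)`. -/
def IsIdeal (A I : Finset (AffineSubspace K V)) : Prop :=
  I ⊆ poset A ∧ ∀ X ∈ I, ∀ Y ∈ poset A, X ≤ Y → Y ∈ I

/-- The principal ideal `⟨X⟩ = {Y ∈ L(A) : Y ≤ X}` of `L(A)` (in the
reverse-inclusion order of `L(A)`, i.e. `{Y ∈ L(A) : X ⊆ Y}`). -/
noncomputable def principal (A : Finset (AffineSubspace K V)) (X : AffineSubspace K V) :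
    Finset (AffineSubspace K V) :=
  (poset A).filter fun Y => X ≤ Y

/-- The meet `X ∧ Y` in `L(A)`: the greatest element of `L(A)` below both `X` and `Y`
(in the reverse-inclusion order); in terms of affine subspaces it is the smallest
element of `L(A)` containing both `X` and `Y`.  In particular `X ∧ Y = 0̂` iff
`lmeet A X Y = ⊤`. -/
noncomputable def lmeet (A : Finset (AffineSubspace K V)) (X Y : AffineSubspace K V) :
    AffineSubspace K V :=
  sInf {W | W ∈ poset A ∧ X ≤ W ∧ Y ≤ W}

/-- An ideal decomposition `{I_1, …, I_m}` of `L(A)`: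
(I1) for every `X ∈ L(A) \ {0̂}` some `I j ∩ ⟨X⟩` is a nontrivial principal ideal;
(I2) joins `X_1 ∨ ⋯ ∨ X_m` (i.e. intersections) of members of the ideals exist;
(I3) these joins satisfy the rank condition. -/
def IsIdealDecomposition (A : Finset (AffineSubspace K V)) {m : ℕ}
    (I : Fin m → Finset (AffineSubspace K V)) : Prop :=
  (∀ i, IsIdeal A (I i)) ∧
  (∀ X ∈ poset A, X ≠ ⊤ →
    ∃ j, ∃ Z ∈ poset A, Z ≠ ⊤ ∧ I j ∩ principal A X = principal A Z) ∧
  (∀ f : Fin m → AffineSubspace K V, (∀ i, f i ∈ I i) →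
    Finset.univ.inf f ≠ (⊥ : AffineSubspace K V)) ∧
  (∀ f : Fin m → AffineSubspace K V, (∀ i, f i ∈ I i) →
    rk (Finset.univ.inf f) = ∑ i, rk (f i))

/-- The meet-complement `I^c = {Y ∈ L(A) : Y ∧ X = 0̂ for all X ∈ I}`. -/
noncomputable def meetCompl (A I : Finset (AffineSubspace K V)) : Finset (AffineSubspace K V) :=
  (poset A).filter fun Y => ∀ X ∈ I, lmeet A X Y = ⊤

/-- An ideal `I` is modular if `{I, I^c}` is an ideal decomposition of `L(A)`. -/
def IsModularIdeal (A I : Finset (AffineSubspace K V)) : Prop :=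
  IsIdealDecomposition A ![I, meetCompl A I]

/-- `μ` is the Möbius function `μ(0̂, ·)` of the finite intersection poset `P`
(ordered by reverse inclusion, with minimal element the maximal affine subspace in `P`):
the sum of `μ` over an interval `[0̂, X]` is `1` if `X = 0̂` and `0` otherwise. -/
def IsMobiusOn (P : Finset (AffineSubspace K V)) (μ : AffineSubspace K V → ℤ) : Prop :=
  ∀ X ∈ P, ∑ Z ∈ P.filter (fun Z => X ≤ Z), μ Z = if ∀ Z ∈ P, Z ≤ X then 1 else 0

/-- The characteristic polynomial `χ(t) = ∑_{X ∈ P} μ(X) t^{dim X}` of an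
intersection poset `P` with Möbius function `μ`. -/
noncomputable def charPolyOn (P : Finset (AffineSubspace K V)) (μ : AffineSubspace K V → ℤ) :
    Polynomial ℤ :=
  ∑ X ∈ P, C (μ X) * Polynomial.X ^ (Module.finrank K X.direction)

/-- The characteristic polynomial `χ̃(I, t) = ∑_{X ∈ I} μ(X) t^{r(I) - r(X)}` of an ideal. -/
noncomputable def tildeChi (μ : AffineSubspace K V → ℤ) (I : Finset (AffineSubspace K V)) :
    Polynomial ℤ :=
  ∑ X ∈ I, C (μ X) * Polynomial.X ^ (I.sup rk - rk X)

/-- A central arrangement: the intersection of all hyperplanes is nonempty. -/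
def IsCentral (A : Finset (AffineSubspace K V)) : Prop := A.inf id ≠ ⊥

/-- A modular element `Z ∈ L(A)`: `r(Z) + r(X) = r(Z ∧ X) + r(Z ∨ X)` for all `X ∈ L(A)`
(the join `Z ∨ X` being the intersection `Z ⊓ X` of affine subspaces). -/
def IsModularElement (A : Finset (AffineSubspace K V)) (Z : AffineSubspace K V) : Prop :=
  Z ∈ poset A ∧ ∀ X ∈ poset A, rk Z + rk X = rk (lmeet A Z X) + rk (Z ⊓ X)

/-- The intersection poset of the restriction `B^W = {H ∩ W : H ∈ B, H ∩ W ≠ ∅}`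
of the arrangement `B` to the affine subspace `W`, realized as a finset of affine
subspaces of the ambient space (with minimal element `W`). -/
noncomputable def tracePoset (B : Finset (AffineSubspace K V)) (W : AffineSubspace K V) :
    Finset (AffineSubspace K V) :=
  (((B.filter fun H => H ⊓ W ≠ ⊥).image fun H => H ⊓ W).powerset.image
      fun S => W ⊓ S.inf id).filter (· ≠ ⊥)

/-- A modular subarrangement `B ⊆ A`: `L(B)`, viewed as a subposet of `L(A)`,
is a modular ideal of `L(A)`. -/
def IsModularSub (A B : Finset (AffineSubspace K V)) : Prop :=
  B ⊆ A ∧ IsModularIdeal A (poset B)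

end HypArr
namespace HypArr

variable {K V : Type*} [Field K] [AddCommGroup V] [Module K V] [FiniteDimensional K V]
variable {A : Finset (AffineSubspace K V)}

lemma mem_poset_iff {X : AffineSubspace K V} :
    X ∈ poset A ↔ (∃ S ⊆ A, S.inf id = X) ∧ X ≠ ⊥ := by
  simp [poset, Finset.mem_filter, Finset.mem_image, Finset.mem_powerset]

lemma top_ne_bot' : (⊤ : AffineSubspace K V) ≠ ⊥ :=
  (AffineSubspace.nonempty_iff_ne_bot _).1 ⟨0, trivial⟩

lemma top_mem_poset : (⊤ : AffineSubspace K V) ∈ poset A :=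
  mem_poset_iff.2 ⟨⟨∅, by simp, by simp⟩, top_ne_bot'⟩

lemma inf_A_le {X : AffineSubspace K V} (hX : X ∈ poset A) : A.inf id ≤ X := by
  obtain ⟨⟨S, hS, rfl⟩, -⟩ := mem_poset_iff.1 hX
  exact Finset.inf_mono hS

lemma ne_bot_of_mem_poset {X : AffineSubspace K V} (hX : X ∈ poset A) : X ≠ ⊥ :=
  (mem_poset_iff.1 hX).2

lemma nonempty_of_mem_poset {X : AffineSubspace K V} (hX : X ∈ poset A) :
    (X : Set V).Nonempty :=
  (AffineSubspace.nonempty_iff_ne_bot _).2 (ne_bot_of_mem_poset hX)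

lemma central_point (hc : IsCentral A) : ∃ p : V, ∀ X ∈ poset A, p ∈ X := by
  obtain ⟨p, hp⟩ := (AffineSubspace.nonempty_iff_ne_bot (A.inf id)).2 hc
  exact ⟨p, fun X hX => inf_A_le hX hp⟩

lemma subset_inf_mem_poset (hc : IsCentral A) {S : Finset (AffineSubspace K V)} (hS : S ⊆ A) :
    S.inf id ∈ poset A :=
  mem_poset_iff.2 ⟨⟨S, hS, rfl⟩, fun h => hc (le_bot_iff.1 (h ▸ Finset.inf_mono hS))⟩

lemma inf_mem_poset {X Y : AffineSubspace K V} (hX : X ∈ poset A) (hY : Y ∈ poset A)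
    (h : X ⊓ Y ≠ ⊥) : X ⊓ Y ∈ poset A := by
  obtain ⟨⟨S, hS, rfl⟩, -⟩ := mem_poset_iff.1 hX
  obtain ⟨⟨T, hT, rfl⟩, -⟩ := mem_poset_iff.1 hY
  exact mem_poset_iff.2 ⟨⟨S ∪ T, Finset.union_subset hS hT, Finset.inf_union⟩, h⟩

lemma central_inf_ne_bot (hc : IsCentral A) {X Y : AffineSubspace K V}
    (hX : X ∈ poset A) (hY : Y ∈ poset A) : X ⊓ Y ≠ ⊥ :=
  fun h => hc (le_bot_iff.1 (h ▸ le_inf (inf_A_le hX) (inf_A_le hY)))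

end HypArr
namespace HypArr

set_option linter.unusedSectionVars false
set_option linter.unusedVariables false

variable {K V : Type*} [Field K] [AddCommGroup V] [Module K V] [FiniteDimensional K V]
variable {A : Finset (AffineSubspace K V)}

lemma finsetInf_mem_poset : ∀ T : Finset (AffineSubspace K V), T ⊆ poset A →
    T.inf id ≠ ⊥ → T.inf id ∈ poset A := by
  intro T
  induction T using Finset.induction_on with
  | empty => intro _ _; simpa using (top_mem_poset (A := A))
  | @insert a s ha ih =>
    intro hsub hne
    rw [Finset.inf_insert] at hne ⊢
    have hs : s.inf id ≠ ⊥ := by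
      intro h
      rw [h, inf_bot_eq] at hne
      exact hne rfl
    exact inf_mem_poset (hsub (Finset.mem_insert_self a s))
      (ih (fun x hx => hsub (Finset.mem_insert_of_mem hx)) hs) hne

lemma lmeet_eq_finset_inf (Z X : AffineSubspace K V) :
    lmeet A Z X = ((poset A).filter fun W => Z ≤ W ∧ X ≤ W).inf id := by
  rw [lmeet, Finset.inf_id_eq_sInf]
  congr 1
  ext W
  simp [Finset.mem_filter]

lemma lmeet_mem_poset (hc : IsCentral A) (Z X : AffineSubspace K V) :
    lmeet A Z X ∈ poset A := by
  rw [lmeet_eq_finset_inf]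
  refine finsetInf_mem_poset _ (Finset.filter_subset _ _) ?_
  intro h
  refine hc (le_bot_iff.1 ?_)
  rw [← h]
  exact Finset.le_inf fun W hW => inf_A_le (Finset.mem_filter.1 hW).1

lemma le_lmeet_left (Z X : AffineSubspace K V) : Z ≤ lmeet A Z X :=
  le_sInf fun W hW => hW.2.1

lemma le_lmeet_right (Z X : AffineSubspace K V) : X ≤ lmeet A Z X :=
  le_sInf fun W hW => hW.2.2

lemma lmeet_le {Z X W : AffineSubspace K V} (hW : W ∈ poset A) (h1 : Z ≤ W) (h2 : X ≤ W) :
    lmeet A Z X ≤ W :=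
  sInf_le ⟨hW, h1, h2⟩

lemma lmeet_top_right (A : Finset (AffineSubspace K V)) (Y : AffineSubspace K V) :
    lmeet A Y ⊤ = ⊤ :=
  top_unique (le_lmeet_right Y ⊤)

/- rank lemmas -/

lemma rk_add (X : AffineSubspace K V) :
    rk X + Module.finrank K X.direction = Module.finrank K V :=
  Nat.sub_add_cancel (Submodule.finrank_le _)

lemma rk_top : rk (⊤ : AffineSubspace K V) = 0 := by
  have e1 := rk_add (⊤ : AffineSubspace K V)
  have e2 : Module.finrank K (⊤ : AffineSubspace K V).direction = Module.finrank K V := by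
    rw [AffineSubspace.direction_top]
    exact finrank_top K V
  omega

lemma rk_mono {X Y : AffineSubspace K V} (h : X ≤ Y) : rk Y ≤ rk X :=
  Nat.sub_le_sub_left (Submodule.finrank_mono (AffineSubspace.direction_le h)) _

lemma eq_of_le_of_rk_le {X Y : AffineSubspace K V} (hne : (X : Set V).Nonempty)
    (hle : X ≤ Y) (h : rk X ≤ rk Y) : X = Y := by
  have h1 : X.direction ≤ Y.direction := AffineSubspace.direction_le hle
  have h4 : Module.finrank K X.direction ≤ Module.finrank K Y.direction :=
    Submodule.finrank_mono h1
  have e1 := rk_add X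
  have e2 := rk_add Y
  have h5 : Module.finrank K Y.direction ≤ Module.finrank K X.direction := by omega
  have hd : X.direction = Y.direction := Submodule.eq_of_le_of_finrank_le h1 h5
  obtain ⟨p, hp⟩ := hne
  exact AffineSubspace.ext_of_direction_eq hd ⟨p, hp, hle hp⟩

lemma eq_top_of_rk_eq_zero {X : AffineSubspace K V} (hne : (X : Set V).Nonempty)
    (h : rk X = 0) : X = ⊤ :=
  eq_of_le_of_rk_le hne le_top (by rw [rk_top]; omega)

lemma one_le_rk {W : AffineSubspace K V} (hne : (W : Set V).Nonempty) (hW : W ≠ ⊤) :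
    1 ≤ rk W := by
  by_contra h
  exact hW (eq_top_of_rk_eq_zero hne (by omega))

lemma rk_inf_le {X Y : AffineSubspace K V} {p : V} (hpX : p ∈ X) (hpY : p ∈ Y) :
    rk (X ⊓ Y) ≤ rk X + rk Y := by
  have hd : Module.finrank K (X ⊓ Y).direction
      = Module.finrank K (X.direction ⊓ Y.direction : Submodule K V) := by
    rw [AffineSubspace.direction_inf_of_mem hpX hpY]
  have hs : Module.finrank K (X.direction ⊔ Y.direction : Submodule K V)
        + Module.finrank K (X.direction ⊓ Y.direction : Submodule K V)
      = Module.finrank K X.direction + Module.finrank K Y.direction :=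
    Submodule.finrank_sup_add_finrank_inf_eq X.direction Y.direction
  have h3 : Module.finrank K (X.direction ⊔ Y.direction : Submodule K V)
      ≤ Module.finrank K V := Submodule.finrank_le _
  have e1 := rk_add (X ⊓ Y)
  have e2 := rk_add X
  have e3 := rk_add Y
  omega

lemma easy_dir {Z X M : AffineSubspace K V} {p : V} (hpZ : p ∈ Z) (hpX : p ∈ X)
    (hZM : Z ≤ M) (hXM : X ≤ M) :
    rk M + rk (Z ⊓ X) ≤ rk Z + rk X := by
  have hd : Module.finrank K (Z ⊓ X).direction
      = Module.finrank K (Z.direction ⊓ X.direction : Submodule K V) := by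
    rw [AffineSubspace.direction_inf_of_mem hpZ hpX]
  have hsup : Z.direction ⊔ X.direction ≤ M.direction :=
    sup_le (AffineSubspace.direction_le hZM) (AffineSubspace.direction_le hXM)
  have h4 : Module.finrank K (Z.direction ⊔ X.direction : Submodule K V)
      ≤ Module.finrank K M.direction := Submodule.finrank_mono hsup
  have hs : Module.finrank K (Z.direction ⊔ X.direction : Submodule K V)
        + Module.finrank K (Z.direction ⊓ X.direction : Submodule K V)
      = Module.finrank K Z.direction + Module.finrank K X.direction :=
    Submodule.finrank_sup_add_finrank_inf_eq Z.direction X.direction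
  have e1 := rk_add M
  have e2 := rk_add (Z ⊓ X)
  have e3 := rk_add Z
  have e4 := rk_add X
  omega

/- arrangement atoms -/

lemma mem_poset_of_mem (hA : IsArrangement A) {H : AffineSubspace K V} (hH : H ∈ A) :
    H ∈ poset A :=
  mem_poset_iff.2 ⟨⟨{H}, by simpa using hH, by simp⟩, (hA H hH).1⟩

lemma rk_of_mem (hA : IsArrangement A) {H : AffineSubspace K V} (hH : H ∈ A) : rk H = 1 := by
  have h2 : Module.finrank K V = Module.finrank K H.direction + 1 := (hA H hH).2
  have e1 := rk_add H
  omega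

lemma ne_top_of_mem (hA : IsArrangement A) {H : AffineSubspace K V} (hH : H ∈ A) : H ≠ ⊤ := by
  intro h
  have h2 : Module.finrank K V = Module.finrank K H.direction + 1 := (hA H hH).2
  rw [h, AffineSubspace.direction_top, finrank_top] at h2
  omega

lemma mem_principal {X Y : AffineSubspace K V} :
    Y ∈ principal A X ↔ Y ∈ poset A ∧ X ≤ Y := Finset.mem_filter

lemma inf_univ_two (f : Fin 2 → AffineSubspace K V) :
    Finset.univ.inf f = f 0 ⊓ f 1 := by
  have h : (Finset.univ : Finset (Fin 2)) = {0, 1} := by decide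
  rw [h, Finset.inf_insert, Finset.inf_singleton]

end HypArr
namespace HypArr

set_option linter.unusedSectionVars false
set_option linter.unusedVariables false
set_option maxHeartbeats 1000000

variable {K V : Type*} [Field K] [AddCommGroup V] [Module K V] [FiniteDimensional K V]
variable {A : Finset (AffineSubspace K V)}

lemma key (hA : IsArrangement A) (hc : IsCentral A)
    {Z : AffineSubspace K V} (hZ : Z ∈ poset A)
    {J : Finset (AffineSubspace K V)} (hJ : J ⊆ poset A) (hTopJ : ⊤ ∈ J)
    (hAtoms : ∀ H ∈ A, Z ≤ H ∨ H ∈ J)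
    (hI3 : ∀ W ∈ poset A, Z ≤ W → ∀ Y ∈ J, rk (W ⊓ Y) = rk W + rk Y)
    (hI1 : ∀ Q ∈ poset A, Q ≠ ⊤ →
      (∃ W ∈ poset A, W ≠ ⊤ ∧ Z ≤ W ∧ Q ≤ W) ∨
      (∃ W ∈ J, Q ≤ W ∧ ∀ V' ∈ J, Q ≤ V' → W ≤ V')) :
    IsModularElement A Z := by
  obtain ⟨p, hp⟩ := central_point hc
  -- the key decomposition property, by induction on the generating set
  have D : ∀ S : Finset (AffineSubspace K V), S ⊆ A →
      ∃ Y ∈ J, S.inf id ≤ Y ∧ Z ⊓ Y = Z ⊓ S.inf id ∧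
        rk (S.inf id) ≤ rk Y + rk (lmeet A Z (S.inf id)) := by
    intro S
    induction S using Finset.induction_on with
    | empty =>
      intro _
      refine ⟨⊤, hTopJ, le_top, by simp, ?_⟩
      rw [Finset.inf_empty, rk_top]
      omega
    | @insert H S₀ hHS₀ ih =>
      intro hsub
      have hHA : H ∈ A := hsub (Finset.mem_insert_self H S₀)
      have hS₀A : S₀ ⊆ A := fun x hx => hsub (Finset.mem_insert_of_mem hx)
      obtain ⟨Y', hY'J, hX'Y', hZY', hrk'⟩ := ih hS₀A
      have hXeq : (insert H S₀).inf id = H ⊓ S₀.inf id := by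
        rw [Finset.inf_insert]; rfl
      set X' := S₀.inf id with hX'def
      set X : AffineSubspace K V := (insert H S₀).inf id with hXdef
      have hX'poset : X' ∈ poset A := subset_inf_mem_poset hc hS₀A
      have hXposet : X ∈ poset A := subset_inf_mem_poset hc hsub
      have hHposet : H ∈ poset A := mem_poset_of_mem hA hHA
      have hXle : X ≤ X' := hXeq ▸ inf_le_right
      have hXleH : X ≤ H := hXeq ▸ inf_le_left
      by_cases hXX' : X = X'
      · rw [hXX']
        exact ⟨Y', hY'J, hX'Y', hZY', hrk'⟩
      -- the rank jumps by one
      have hnleH : ¬ X' ≤ H := by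
        intro h
        exact hXX' (by rw [hXeq, inf_eq_right.2 h])
      have hrkX'X : rk X' + 1 ≤ rk X := by
        have h1 : rk X' ≤ rk X := rk_mono hXle
        rcases Nat.lt_or_ge (rk X') (rk X) with h | h
        · omega
        · exact absurd (eq_of_le_of_rk_le (nonempty_of_mem_poset hXposet) hXle h) hXX'
      have hrkXle : rk X ≤ rk X' + 1 := by
        have := rk_inf_le (p := p) (hp H hHposet) (hp X' hX'poset)
        rw [← hXeq] at this
        rw [rk_of_mem hA hHA] at this
        omega
      -- lmeet facts
      set M' : AffineSubspace K V := lmeet A Z X' with hM'def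
      set M : AffineSubspace K V := lmeet A Z X with hMdef
      have hM'poset : M' ∈ poset A := lmeet_mem_poset hc Z X'
      have hMposet : M ∈ poset A := lmeet_mem_poset hc Z X
      have hZM' : Z ≤ M' := le_lmeet_left Z X'
      have hX'M' : X' ≤ M' := le_lmeet_right Z X'
      have hMM' : M ≤ M' := lmeet_le hM'poset hZM' (hXle.trans hX'M')
      have hrkM'M : rk M' ≤ rk M := rk_mono hMM'
      have jump : ∀ W ∈ poset A, Z ≤ W → X ≤ W → ¬ X' ≤ W → rk M' + 1 ≤ rk M := by
        intro W hW hZW hXW hX'W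
        have hMW : M ≤ W := lmeet_le hW hZW hXW
        have hne : M ≠ M' := by
          intro h
          exact hX'W (hX'M'.trans (h ▸ hMW))
        rcases Nat.lt_or_ge (rk M') (rk M) with h | h
        · omega
        · exact absurd (eq_of_le_of_rk_le (nonempty_of_mem_poset hMposet) hMM' h) hne
      rcases hAtoms H hHA with hZH | hHJ
      · -- H contains Z
        refine ⟨Y', hY'J, hXle.trans hX'Y', ?_, ?_⟩
        · rw [hZY', hXeq, inf_left_comm, inf_eq_right.2 (inf_le_left.trans hZH)]
        · have hj := jump H hHposet hZH hXleH hnleH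
          omega
      · -- H belongs to J
        set Q : AffineSubspace K V := Y' ⊓ H with hQdef
        have hQne : Q ≠ ⊥ := central_inf_ne_bot hc (hJ hY'J) hHposet
        have hQposet : Q ∈ poset A := inf_mem_poset (hJ hY'J) hHposet hQne
        have hQtop : Q ≠ ⊤ := by
          intro h
          exact ne_top_of_mem hA hHA (top_unique (h ▸ inf_le_right))
        have hXQ : X ≤ Q := by
          rw [hXeq, hQdef]
          exact le_inf (inf_le_right.trans hX'Y') inf_le_left
        have hY'nleH : ¬ Y' ≤ H := fun h => hnleH (hX'Y'.trans h)
        have hQY' : Q ≤ Y' := inf_le_left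
        have hQneY' : Q ≠ Y' := by
          intro h
          exact hY'nleH (by rw [← h]; exact inf_le_right)
        have hrkQ : rk Y' + 1 ≤ rk Q := by
          have h1 : rk Y' ≤ rk Q := rk_mono hQY'
          rcases Nat.lt_or_ge (rk Y') (rk Q) with h | h
          · omega
          · exact absurd (eq_of_le_of_rk_le (nonempty_of_mem_poset hQposet) hQY' h) hQneY'
        have hrkQle : rk Q ≤ rk Y' + 1 := by
          have := rk_inf_le (p := p) (hp Y' (hJ hY'J)) (hp H hHposet)
          rw [← hQdef, rk_of_mem hA hHA] at this
          omega
        rcases hI1 Q hQposet hQtop with ⟨W, hWposet, hWtop, hZW, hQW⟩ | ⟨W, hWJ, hQW, hWmin⟩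
        · -- Z-side case
          have hI3W : rk (W ⊓ Y') = rk W + rk Y' := hI3 W hWposet hZW Y' hY'J
          have hQWY' : Q ≤ W ⊓ Y' := le_inf hQW hQY'
          have hrkWY' : rk (W ⊓ Y') ≤ rk Q := rk_mono hQWY'
          have hrkW1 : 1 ≤ rk W := one_le_rk (nonempty_of_mem_poset hWposet) hWtop
          have hQeq : Q = W ⊓ Y' :=
            eq_of_le_of_rk_le (nonempty_of_mem_poset hQposet) hQWY' (by omega)
          refine ⟨Y', hY'J, hXle.trans hX'Y', ?_, ?_⟩
          · -- Z ⊓ Y' = Z ⊓ X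
            have h1 : Z ⊓ Y' ≤ H := by
              have h2 : Z ⊓ Y' ≤ W ⊓ Y' := inf_le_inf_right Y' hZW
              rw [← hQeq] at h2
              exact h2.trans inf_le_right
            rw [hXeq, inf_left_comm, ← hZY']
            exact (inf_eq_right.2 h1).symm
          · have hj : rk M' + 1 ≤ rk M := by
              refine jump W hWposet hZW (hXQ.trans hQW) ?_
              intro h
              exact hnleH ((le_inf h hX'Y').trans (hQeq ▸ inf_le_right : W ⊓ Y' ≤ H) )
            omega
        · -- J-side case
          have hWY' : W ≤ Y' := hWmin Y' hY'J hQY'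
          have hWH : W ≤ H := hWmin H hHJ inf_le_right
          have hWeq : W = Q := le_antisymm (le_inf hWY' hWH) hQW
          refine ⟨Q, hWeq ▸ hWJ, hXQ, ?_, ?_⟩
          · -- Z ⊓ Q = Z ⊓ X
            calc Z ⊓ Q = Z ⊓ Y' ⊓ H := by rw [hQdef, ← inf_assoc]
              _ = Z ⊓ X' ⊓ H := by rw [hZY']
              _ = Z ⊓ (H ⊓ X') := by rw [inf_assoc, inf_comm X' H]
              _ = Z ⊓ X := by rw [hXeq]
          · omega
  -- now derive modularity
  refine ⟨hZ, fun X hX => ?_⟩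
  obtain ⟨⟨S, hS, hSX⟩, -⟩ := mem_poset_iff.1 hX
  obtain ⟨Y, hYJ, hXY, hZYX, hrk⟩ := D S hS
  rw [hSX] at hXY hZYX hrk
  have hI3Z : rk (Z ⊓ Y) = rk Z + rk Y := hI3 Z hZ le_rfl Y hYJ
  have hhard : rk Z + rk X ≤ rk (lmeet A Z X) + rk (Z ⊓ X) := by
    rw [← hZYX, hI3Z]
    omega
  have heasy : rk (lmeet A Z X) + rk (Z ⊓ X) ≤ rk Z + rk X :=
    easy_dir (hp Z hZ) (hp X hX) (le_lmeet_left Z X) (le_lmeet_right Z X)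
  omega

end HypArr
namespace HypArr

set_option linter.unusedSectionVars false
set_option linter.unusedVariables false
set_option maxHeartbeats 1000000

variable {K V : Type*} [Field K] [AddCommGroup V] [Module K V] [FiniteDimensional K V]
variable {A : Finset (AffineSubspace K V)}

lemma center_modular (hc : IsCentral A) : IsModularElement A (A.inf id) := by
  have hcposet : A.inf id ∈ poset A :=
    mem_poset_iff.2 ⟨⟨A, le_refl A, rfl⟩, hc⟩
  refine ⟨hcposet, fun X hX => ?_⟩
  have hlm : lmeet A (A.inf id) X = X :=
    le_antisymm (lmeet_le hX (inf_A_le hX) le_rfl) (le_lmeet_right _ X)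
  have hinf : A.inf id ⊓ X = A.inf id := inf_eq_left.2 (inf_A_le hX)
  rw [hlm, hinf]
  omega

lemma key_pair (hA : IsArrangement A) (hc : IsCentral A)
    (I0 I1 : Finset (AffineSubspace K V))
    (hIdeal1 : IsIdeal A I1)
    (hI1 : ∀ X ∈ poset A, X ≠ ⊤ → ∃ W ∈ poset A, W ≠ ⊤ ∧
      (I0 ∩ principal A X = principal A W ∨ I1 ∩ principal A X = principal A W))
    (hI3 : ∀ X0 ∈ I0, ∀ X1 ∈ I1, rk (X0 ⊓ X1) = rk X0 + rk X1)
    (Z : AffineSubspace K V) (hZposet : Z ∈ poset A) (hZeq : I0 = principal A Z)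
    (hTopJ : ⊤ ∈ I1) :
    IsModularElement A Z := by
  refine key hA hc hZposet hIdeal1.1 hTopJ ?_ ?_ ?_
  · -- atoms
    intro H hH
    have hHposet := mem_poset_of_mem hA hH
    obtain ⟨W, hWposet, hWtop, hWeq⟩ := hI1 H hHposet (ne_top_of_mem hA hH)
    have hWself : W ∈ principal A W := mem_principal.2 ⟨hWposet, le_rfl⟩
    rcases hWeq with heq | heq
    · have hWmem := heq ▸ hWself
      rcases Finset.mem_inter.1 hWmem with ⟨hWI, hWH⟩
      have hHW : H ≤ W := (mem_principal.1 hWH).2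
      have hWH' : H = W := eq_of_le_of_rk_le (nonempty_of_mem_poset hHposet) hHW
        (by rw [rk_of_mem hA hH]; exact one_le_rk (nonempty_of_mem_poset hWposet) hWtop)
      left
      have : W ∈ principal A Z := hZeq ▸ hWI
      exact hWH' ▸ (mem_principal.1 this).2
    · have hWmem := heq ▸ hWself
      rcases Finset.mem_inter.1 hWmem with ⟨hWI, hWH⟩
      have hHW : H ≤ W := (mem_principal.1 hWH).2
      have hWH' : H = W := eq_of_le_of_rk_le (nonempty_of_mem_poset hHposet) hHW
        (by rw [rk_of_mem hA hH]; exact one_le_rk (nonempty_of_mem_poset hWposet) hWtop)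
      right
      exact hWH' ▸ hWI
  · -- I3
    intro W hWposet hZW Y hY
    exact hI3 W (hZeq ▸ mem_principal.2 ⟨hWposet, hZW⟩) Y hY
  · -- I1
    intro Q hQ hQtop
    obtain ⟨W, hWposet, hWtop, hWeq⟩ := hI1 Q hQ hQtop
    have hWself : W ∈ principal A W := mem_principal.2 ⟨hWposet, le_rfl⟩
    rcases hWeq with heq | heq
    · left
      have hWmem := heq ▸ hWself
      rcases Finset.mem_inter.1 hWmem with ⟨hWI, hWQ⟩
      have := hZeq ▸ hWI
      exact ⟨W, hWposet, hWtop, (mem_principal.1 this).2, (mem_principal.1 hWQ).2⟩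
    · right
      have hWmem := heq ▸ hWself
      rcases Finset.mem_inter.1 hWmem with ⟨hWI, hWQ⟩
      refine ⟨W, hWI, (mem_principal.1 hWQ).2, fun V' hV' hQV' => ?_⟩
      have : V' ∈ I1 ∩ principal A Q :=
        Finset.mem_inter.2 ⟨hV', mem_principal.2 ⟨hIdeal1.1 hV', hQV'⟩⟩
      rw [heq] at this
      exact (mem_principal.1 this).2

end HypArr
namespace HypArr

set_option linter.unusedSectionVars false
set_option linter.unusedVariables false
set_option maxHeartbeats 1000000

/-- **Proposition.** In a central arrangement, if `I` is a modular ideal of `L(A)`,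
then `I` or its meet-complement `I^c` is a principal ideal generated by a modular
element. -/
theorem modularIdeal_principal_or_compl_principal
    {K V : Type*} [Field K] [AddCommGroup V] [Module K V] [FiniteDimensional K V]
    (A : Finset (AffineSubspace K V)) (hA : IsArrangement A) (hc : IsCentral A)
    (I : Finset (AffineSubspace K V)) (hI : IsModularIdeal A I) :
    (∃ Z : AffineSubspace K V, IsModularElement A Z ∧ I = principal A Z) ∨
    (∃ Z : AffineSubspace K V, IsModularElement A Z ∧ meetCompl A I = principal A Z) := by
  by_cases hAe : A = ∅
  · -- degenerate case: empty arrangement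
    subst hAe
    right
    have hposet : poset (∅ : Finset (AffineSubspace K V)) = {⊤} := by
      ext X
      rw [mem_poset_iff, Finset.mem_singleton]
      constructor
      · rintro ⟨⟨S, hS, rfl⟩, h⟩
        rw [Finset.subset_empty.1 hS, Finset.inf_empty]
      · rintro rfl
        exact ⟨⟨∅, Finset.Subset.refl _, Finset.inf_empty⟩, top_ne_bot'⟩
    refine ⟨⊤, ⟨top_mem_poset, ?_⟩, ?_⟩
    · intro X hX
      rw [hposet, Finset.mem_singleton] at hX
      subst hX
      rw [lmeet_top_right, top_inf_eq]
    · ext X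
      simp only [meetCompl, principal, Finset.mem_filter]
      constructor
      · rintro ⟨h1, -⟩
        refine ⟨h1, ?_⟩
        rw [hposet, Finset.mem_singleton] at h1
        exact h1 ▸ le_rfl
      · rintro ⟨h1, h2⟩
        have hX : X = ⊤ := top_unique h2
        subst hX
        exact ⟨h1, fun Y hY => lmeet_top_right _ Y⟩
  · -- main case
    have hAne : A.Nonempty := Finset.nonempty_iff_ne_empty.2 hAe
    obtain ⟨H0, hH0⟩ := hAne
    have hcposet : A.inf id ∈ poset A :=
      mem_poset_iff.2 ⟨⟨A, Finset.Subset.refl _, rfl⟩, hc⟩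
    have hcnetop : A.inf id ≠ ⊤ := by
      intro h
      exact ne_top_of_mem hA hH0 (top_unique (h ▸ Finset.inf_le hH0))
    have hPP : principal A (A.inf id) = poset A :=
      Finset.filter_true_of_mem fun X hX => inf_A_le hX
    obtain ⟨hIdeals, h1, h2, h3⟩ := hI
    obtain ⟨j, Z, hZposet, hZtop, hZeq⟩ := h1 (A.inf id) hcposet hcnetop
    rw [hPP] at hZeq
    have hZeq' : ![I, meetCompl A I] j = principal A Z := by
      rw [← hZeq, Finset.inter_eq_left.2 (hIdeals j).1]
    have hI1sym : ∀ X ∈ poset A, X ≠ ⊤ → ∃ W ∈ poset A, W ≠ ⊤ ∧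
        (I ∩ principal A X = principal A W ∨
          meetCompl A I ∩ principal A X = principal A W) := by
      intro X hX hXtop
      obtain ⟨j2, W, hW1, hW2, hW3⟩ := h1 X hX hXtop
      refine ⟨W, hW1, hW2, ?_⟩
      fin_cases j2
      · left; simpa using hW3
      · right; simpa using hW3
    have hI3pair : ∀ X0 ∈ I, ∀ X1 ∈ meetCompl A I, rk (X0 ⊓ X1) = rk X0 + rk X1 := by
      intro X0 hX0 X1 hX1
      have hf : ∀ i, (![X0, X1] : Fin 2 → AffineSubspace K V) i ∈ ![I, meetCompl A I] i := by
        intro i; fin_cases i <;> simpa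
      have h := h3 ![X0, X1] hf
      rw [inf_univ_two, Fin.sum_univ_two] at h
      simpa using h
    fin_cases j
    · -- I = principal A Z
      simp only [Fin.zero_eta, Fin.isValue, Matrix.cons_val_zero] at hZeq'
      left
      refine ⟨Z, ?_, hZeq'⟩
      refine key_pair hA hc I (meetCompl A I) ?_ hI1sym hI3pair Z hZposet hZeq' ?_
      · simpa using hIdeals 1
      · exact Finset.mem_filter.2 ⟨top_mem_poset, fun X0 hX0 => lmeet_top_right A X0⟩
    · -- meetCompl A I = principal A Z
      simp only [Fin.mk_one, Fin.isValue, Matrix.cons_val_one, Matrix.head_cons, Matrix.cons_val_zero] at hZeq'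
      right
      refine ⟨Z, ?_, hZeq'⟩
      by_cases hIe : I = ∅
      · have hmc : meetCompl A I = poset A := by
          refine Finset.filter_true_of_mem fun X hX => ?_
          intro Y hY
          rw [hIe] at hY
          exact absurd hY (Finset.notMem_empty Y)
        rw [hmc] at hZeq'
        have hZc : Z = A.inf id := by
          have ha : A.inf id ≤ Z := inf_A_le hZposet
          have hb : Z ≤ A.inf id := (mem_principal.1 (hZeq' ▸ hcposet)).2
          exact le_antisymm hb ha
        rw [hZc]
        exact center_modular hc
      · obtain ⟨X0, hX0⟩ := Finset.nonempty_iff_ne_empty.2 hIe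
        have hIdeal0 : IsIdeal A I := by simpa using hIdeals 0
        have hTopI : ⊤ ∈ I := hIdeal0.2 X0 hX0 ⊤ top_mem_poset le_top
        refine key_pair hA hc (meetCompl A I) I hIdeal0 ?_ ?_ Z hZposet hZeq' hTopI
        · intro X hX hXtop
          obtain ⟨W, hW1, hW2, hW3⟩ := hI1sym X hX hXtop
          exact ⟨W, hW1, hW2, hW3.symm⟩
        · intro Y0 hY0 Y1 hY1
          rw [inf_comm, hI3pair Y1 hY1 Y0 hY0, Nat.add_comm]

end HypArr
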